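/- Let f₃ denote the free Lie algebra over ℂ on three generators x, y, z, and let [x] and [y] denote the Lie ideals of f₃ generated by x and by y. Then [x] ∩ [y] = ⁅[x],[y]⁆, i.e. the intersection of the two ideals equals the Lie ideal spanned by all brackets [u,v] with u ∈ [x] and v ∈ [y]. -/

import Mathlib

open FreeLieAlgebra

/-- The free Lie algebra over `ℂ` on three generators. -/
abbrev f3 : Type := FreeLieAlgebra ℂ (Fin 3)

noncomputable def X : f3 := FreeLieAlgebra.of ℂ 0
noncomputable def Y : f3 := FreeLieAlgebra.of ℂ 1

/-- The Lie ideal of `f3` generated by an element `w`. -/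
noncomputable def lieIdealGen (w : f3) : LieIdeal ℂ f3 :=
  LieSubmodule.lieSpan ℂ f3 {w}

noncomputable def Z : f3 := FreeLieAlgebra.of ℂ 2

/-- Projection killing `X`. -/
noncomputable def px : f3 →ₗ⁅ℂ⁆ f3 := lift ℂ ![0, Y, Z]
/-- Projection killing `Y`. -/
noncomputable def py : f3 →ₗ⁅ℂ⁆ f3 := lift ℂ ![X, 0, Z]
/-- Projection killing both `X` and `Y`. -/
noncomputable def pxy : f3 →ₗ⁅ℂ⁆ f3 := lift ℂ ![0, 0, Z]

lemma ofX : of ℂ (0 : Fin 3) = X := rfl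
lemma ofY : of ℂ (1 : Fin 3) = Y := rfl
lemma ofZ : of ℂ (2 : Fin 3) = Z := rfl

lemma comp_eq {f g h : f3 →ₗ⁅ℂ⁆ f3} (H : ∀ i, f (g (of ℂ i)) = h (of ℂ i)) :
    ∀ u, f (g u) = h u := by
  have : f.comp g = h := FreeLieAlgebra.hom_ext H
  exact fun u => LieHom.congr_fun this u

lemma px_X : px X = 0 := by simp [px, X, Y, Z, lift_of_apply]
lemma px_Y : px Y = Y := by simp [px, X, Y, Z, lift_of_apply]
lemma px_Z : px Z = Z := by simp [px, X, Y, Z, lift_of_apply]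
lemma py_X : py X = X := by simp [py, X, Y, Z, lift_of_apply]
lemma py_Y : py Y = 0 := by simp [py, X, Y, Z, lift_of_apply]
lemma py_Z : py Z = Z := by simp [py, X, Y, Z, lift_of_apply]
lemma pxy_X : pxy X = 0 := by simp [pxy, X, Y, Z, lift_of_apply]
lemma pxy_Y : pxy Y = 0 := by simp [pxy, X, Y, Z, lift_of_apply]
lemma pxy_Z : pxy Z = Z := by simp [pxy, X, Y, Z, lift_of_apply]

lemma px_of (i : Fin 3) : px (of ℂ i) = ![(0 : f3), Y, Z] i := lift_of_apply _ i
lemma py_of (i : Fin 3) : py (of ℂ i) = ![X, (0 : f3), Z] i := lift_of_apply _ i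
lemma pxy_of (i : Fin 3) : pxy (of ℂ i) = ![(0 : f3), (0 : f3), Z] i := lift_of_apply _ i

lemma px_px (u : f3) : px (px u) = px u := by
  refine comp_eq (fun i => ?_) u
  rw [px_of]
  fin_cases i <;> simp [ofX, ofY, ofZ, px_X, px_Y, px_Z, px.map_zero]

lemma py_py (u : f3) : py (py u) = py u := by
  refine comp_eq (fun i => ?_) u
  rw [py_of]
  fin_cases i <;> simp [ofX, ofY, ofZ, py_X, py_Y, py_Z, py.map_zero]

lemma py_px (u : f3) : py (px u) = pxy u := by
  refine comp_eq (fun i => ?_) u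
  rw [px_of, pxy_of]
  fin_cases i <;> simp [ofX, ofY, ofZ, py_X, py_Y, py_Z, py.map_zero]

lemma px_py (u : f3) : px (py u) = pxy u := by
  refine comp_eq (fun i => ?_) u
  rw [py_of, pxy_of]
  fin_cases i <;> simp [ofX, ofY, ofZ, px_X, px_Y, px_Z, px.map_zero]

lemma px_pxy (u : f3) : px (pxy u) = pxy u := by
  refine comp_eq (fun i => ?_) u
  rw [pxy_of]
  fin_cases i <;> simp [ofX, ofY, ofZ, px_X, px_Y, px_Z, px.map_zero]

lemma py_pxy (u : f3) : py (pxy u) = pxy u := by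
  refine comp_eq (fun i => ?_) u
  rw [pxy_of]
  fin_cases i <;> simp [ofX, ofY, ofZ, py_X, py_Y, py_Z, py.map_zero]

/-- The quotient map by a Lie ideal, as a morphism of Lie algebras. -/
noncomputable def qmk (I : LieIdeal ℂ f3) : f3 →ₗ⁅ℂ⁆ f3 ⧸ I :=
  { (LieSubmodule.Quotient.mk' I).toLinearMap with
    map_lie' := rfl }

lemma qmk_eq_zero_iff {I : LieIdeal ℂ f3} {u : f3} : qmk I u = 0 ↔ u ∈ I :=
  LieSubmodule.Quotient.mk_eq_zero I

lemma genX_eq_ker : lieIdealGen X = px.ker := by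
  apply le_antisymm
  · rw [lieIdealGen, LieSubmodule.lieSpan_le, Set.singleton_subset_iff]
    exact LieHom.mem_ker.mpr px_X
  · intro u hu
    rw [LieHom.mem_ker] at hu
    have h0 : qmk (lieIdealGen X) X = 0 :=
      qmk_eq_zero_iff.mpr (LieSubmodule.subset_lieSpan rfl)
    have key : (qmk (lieIdealGen X)).comp px = qmk (lieIdealGen X) := by
      apply FreeLieAlgebra.hom_ext
      intro i
      rw [LieHom.comp_apply, px_of]
      fin_cases i <;> simp [h0, ofX, ofY, ofZ, (qmk (lieIdealGen X)).map_zero]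
    rw [← qmk_eq_zero_iff]
    calc qmk (lieIdealGen X) u = qmk (lieIdealGen X) (px u) := (LieHom.congr_fun key u).symm
    _ = 0 := by rw [hu, map_zero (qmk (lieIdealGen X))]

lemma genY_eq_ker : lieIdealGen Y = py.ker := by
  apply le_antisymm
  · rw [lieIdealGen, LieSubmodule.lieSpan_le, Set.singleton_subset_iff]
    exact LieHom.mem_ker.mpr py_Y
  · intro u hu
    rw [LieHom.mem_ker] at hu
    have h0 : qmk (lieIdealGen Y) Y = 0 :=
      qmk_eq_zero_iff.mpr (LieSubmodule.subset_lieSpan rfl)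
    have key : (qmk (lieIdealGen Y)).comp py = qmk (lieIdealGen Y) := by
      apply FreeLieAlgebra.hom_ext
      intro i
      rw [LieHom.comp_apply, py_of]
      fin_cases i <;> simp [h0, ofX, ofY, ofZ, (qmk (lieIdealGen Y)).map_zero]
    rw [← qmk_eq_zero_iff]
    calc qmk (lieIdealGen Y) u = qmk (lieIdealGen Y) (py u) := (LieHom.congr_fun key u).symm
    _ = 0 := by rw [hu, map_zero (qmk (lieIdealGen Y))]

lemma mem_genX_iff {u : f3} : u ∈ lieIdealGen X ↔ px u = 0 := by
  rw [genX_eq_ker]; exact LieHom.mem_ker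

lemma mem_genY_iff {u : f3} : u ∈ lieIdealGen Y ↔ py u = 0 := by
  rw [genY_eq_ker]; exact LieHom.mem_ker

/-- The key submodule: range of `px` + range of `py` + the bracket ideal. -/
noncomputable def Smod : Submodule ℂ f3 :=
  (px.range.toSubmodule ⊔ py.range.toSubmodule) ⊔
    LieSubmodule.toSubmodule (⁅lieIdealGen X, lieIdealGen Y⁆ : LieIdeal ℂ f3)

lemma K_mem_Smod {u : f3} (h : u ∈ (⁅lieIdealGen X, lieIdealGen Y⁆ : LieIdeal ℂ f3)) :
    u ∈ Smod :=
  Submodule.mem_sup_right h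

lemma Rx_mem_Smod {u : f3} (h : u ∈ px.range) : u ∈ Smod :=
  Submodule.mem_sup_left (Submodule.mem_sup_left h)

lemma Ry_mem_Smod {u : f3} (h : u ∈ py.range) : u ∈ Smod :=
  Submodule.mem_sup_left (Submodule.mem_sup_right h)

/-- The crux: a bracket of an `x`-free element and a `y`-free element lies in `Smod`. -/
lemma bracket_range_mem (a b : f3) : ⁅px a, py b⁆ ∈ Smod := by
  have ha : px a = (px a - pxy a) + pxy a := by abel
  have hb : py b = (py b - pxy b) + pxy b := by abel
  rw [ha, hb]
  have a1J : (px a - pxy a) ∈ lieIdealGen Y := by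
    rw [mem_genY_iff, map_sub py, py_px, py_pxy, sub_self]
  have b1I : (py b - pxy b) ∈ lieIdealGen X := by
    rw [mem_genX_iff, map_sub px, px_py, px_pxy, sub_self]
  have a1Rx : (px a - pxy a) ∈ px.range :=
    (px.mem_range _).mpr ⟨a - py a, by rw [map_sub px, px_py]⟩
  have a2Rx : pxy a ∈ px.range := (px.mem_range _).mpr ⟨py a, px_py a⟩
  have a2Ry : pxy a ∈ py.range := (py.mem_range _).mpr ⟨px a, py_px a⟩
  have b1Ry : (py b - pxy b) ∈ py.range :=
    (py.mem_range _).mpr ⟨b - px b, by rw [map_sub py, py_px]⟩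
  have b2Rx : pxy b ∈ px.range := (px.mem_range _).mpr ⟨py b, px_py b⟩
  have h11 : ⁅px a - pxy a, py b - pxy b⁆ ∈ Smod := by
    rw [← lie_skew]
    exact Submodule.neg_mem _ (K_mem_Smod (LieSubmodule.lie_mem_lie b1I a1J))
  have h12 : ⁅px a - pxy a, pxy b⁆ ∈ Smod := Rx_mem_Smod (px.range.lie_mem a1Rx b2Rx)
  have h21 : ⁅pxy a, py b - pxy b⁆ ∈ Smod := Ry_mem_Smod (py.range.lie_mem a2Ry b1Ry)
  have h22 : ⁅pxy a, pxy b⁆ ∈ Smod := Rx_mem_Smod (px.range.lie_mem a2Rx b2Rx)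
  simp only [lie_add, add_lie]
  repeat' apply Submodule.add_mem
  all_goals first | exact h11 | exact h12 | exact h21 | exact h22

lemma smod_lie_closed : ∀ {u v : f3}, u ∈ Smod → v ∈ Smod → ⁅u, v⁆ ∈ Smod := by
  intro u v hu hv
  rw [Smod] at hu hv
  obtain ⟨u1, hu1, ku, hku, rfl⟩ := Submodule.mem_sup.mp hu
  obtain ⟨v1, hv1, kv, hkv, rfl⟩ := Submodule.mem_sup.mp hv
  obtain ⟨ax, hax, ay, hay, rfl⟩ := Submodule.mem_sup.mp hu1
  obtain ⟨bx, hbx, by', hby, rfl⟩ := Submodule.mem_sup.mp hv1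
  obtain ⟨a, rfl⟩ := (px.mem_range _).mp hax
  obtain ⟨a', rfl⟩ := (py.mem_range _).mp hay
  obtain ⟨b, rfl⟩ := (px.mem_range _).mp hbx
  obtain ⟨b', rfl⟩ := (py.mem_range _).mp hby
  set K : LieIdeal ℂ f3 := ⁅lieIdealGen X, lieIdealGen Y⁆ with hK
  have hku' : ku ∈ K := hku
  have hkv' : kv ∈ K := hkv
  have hKl : ∀ {w w' : f3}, w ∈ K → ⁅w, w'⁆ ∈ Smod := by
    intro w w' hw
    rw [← lie_skew]
    exact Submodule.neg_mem _ (K_mem_Smod (K.lie_mem hw))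
  have hKr : ∀ {w w' : f3}, w' ∈ K → ⁅w, w'⁆ ∈ Smod := fun hw =>
    K_mem_Smod (K.lie_mem hw)
  have hxx : ⁅px a, px b⁆ ∈ Smod :=
    Rx_mem_Smod (px.range.lie_mem (px.mem_range_self a) (px.mem_range_self b))
  have hyy : ⁅py a', py b'⁆ ∈ Smod :=
    Ry_mem_Smod (py.range.lie_mem (py.mem_range_self a') (py.mem_range_self b'))
  have hxy : ⁅px a, py b'⁆ ∈ Smod := bracket_range_mem a b'
  have hyx : ⁅py a', px b⁆ ∈ Smod := by
    rw [← lie_skew]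
    exact Submodule.neg_mem _ (bracket_range_mem b a')
  simp only [lie_add, add_lie]
  repeat' apply Submodule.add_mem
  all_goals first
    | exact hxx | exact hyy | exact hxy | exact hyx
    | exact hKl hku' | exact hKr hkv'

/-- `Smod` as a Lie subalgebra. -/
noncomputable def Salg : LieSubalgebra ℂ f3 :=
  { Smod with lie_mem' := fun hu hv => smod_lie_closed hu hv }

lemma mem_Salg (u : f3) : u ∈ Salg := by
  have hgen : ∀ i : Fin 3, of ℂ i ∈ Salg := by
    intro i
    fin_cases i
    · exact Ry_mem_Smod ((py.mem_range _).mpr ⟨X, py_X⟩)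
    · exact Rx_mem_Smod ((px.mem_range _).mpr ⟨Y, px_Y⟩)
    · exact Rx_mem_Smod ((px.mem_range _).mpr ⟨Z, px_Z⟩)
  let g : f3 →ₗ⁅ℂ⁆ Salg := lift ℂ (fun i => ⟨of ℂ i, hgen i⟩)
  have key : Salg.incl.comp g = LieHom.id := by
    apply FreeLieAlgebra.hom_ext
    intro i
    rw [LieHom.comp_apply, show g (of ℂ i) = ⟨of ℂ i, hgen i⟩ from lift_of_apply _ i]
    rfl
  have hu : Salg.incl (g u) = u := LieHom.congr_fun key u
  rw [← hu]
  exact (g u).2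

theorem intersection_of_ideals_eq_bracket :
    lieIdealGen X ⊓ lieIdealGen Y = ⁅lieIdealGen X, lieIdealGen Y⁆ := by
  apply le_antisymm
  · intro u hu
    obtain ⟨huX, huY⟩ := (LieSubmodule.mem_inf _ _ _).mp hu
    rw [mem_genX_iff] at huX
    rw [mem_genY_iff] at huY
    have hS : u ∈ Smod := mem_Salg u
    rw [Smod] at hS
    obtain ⟨u1, hu1, k, hk, hsum⟩ := Submodule.mem_sup.mp hS
    obtain ⟨ax, hax, ay, hay, rfl⟩ := Submodule.mem_sup.mp hu1
    obtain ⟨a, rfl⟩ := (px.mem_range _).mp hax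
    obtain ⟨b, rfl⟩ := (py.mem_range _).mp hay
    have hk' : k ∈ (⁅lieIdealGen X, lieIdealGen Y⁆ : LieIdeal ℂ f3) := hk
    have hkIJ : k ∈ lieIdealGen X ⊓ lieIdealGen Y :=
      LieSubmodule.lie_le_inf _ _ hk'
    have hkX : px k = 0 := mem_genX_iff.mp ((LieSubmodule.mem_inf _ _ _).mp hkIJ).1
    have hkY : py k = 0 := mem_genY_iff.mp ((LieSubmodule.mem_inf _ _ _).mp hkIJ).2
    rw [← hsum] at huX huY
    rw [map_add py, map_add py, hkY, add_zero, py_px, py_py] at huY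
    rw [map_add px, map_add px, hkX, add_zero, px_px, px_py] at huX
    -- huY : pxy a + py b = 0, huX : px a + pxy b = 0
    have e1 : pxy a + pxy b = 0 := by
      have := congrArg px huY
      rwa [map_add px, px_pxy, px_py, map_zero px] at this
    have hb : py b = -pxy a := eq_neg_of_add_eq_zero_right huY
    have hpa : px a = pxy a := by
      rw [eq_neg_of_add_eq_zero_left huX, eq_neg_of_add_eq_zero_left e1]
    have h3 : px a + py b = 0 := by rw [hb, hpa, add_neg_cancel]
    rw [← hsum, h3, zero_add]
    exact hk'
  · exact LieSubmodule.lie_le_inf _ _
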